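/- Let X_1,…,X_m be independent Bernoulli(p) random variables with sum Z and mean μ = pm. For any integer w with 1 ≤ w ≤ t and t > μ, Pr(Z ≥ t) ≤ C(m,w)·p^w / C(t,w); moreover when w = ⌈t − μ⌉ this bound is at most (e^ε/(1+ε)^{1+ε})^μ where t = (1+ε)μ. -/

import Mathlib

open Real Finset

-- B n = n! e^n / n^n is monotone for n ≥ 1
lemma Bstep (n : ℕ) (hn : 1 ≤ n) :
    (n.factorial : ℝ) * Real.exp n / (n:ℝ)^n ≤
    ((n+1).factorial : ℝ) * Real.exp (n+1) / ((n:ℝ)+1)^(n+1) := by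
  have hn0 : (0:ℝ) < (n:ℝ) := by exact_mod_cast hn
  have h1 : ((n:ℝ)+1)^n ≤ Real.exp 1 * (n:ℝ)^n := by
    have h2 : (1 + 1/(n:ℝ)) ≤ Real.exp (1/(n:ℝ)) := by
      have := Real.add_one_le_exp (1/(n:ℝ)); linarith
    have h3 : (1 + 1/(n:ℝ))^n ≤ Real.exp (1/(n:ℝ)) ^ n :=
      pow_le_pow_left₀ (by positivity) h2 n
    have h4 : Real.exp (1/(n:ℝ)) ^ n = Real.exp 1 := by
      rw [← Real.exp_nat_mul]
      congr 1
      field_simp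
    have h5 : ((n:ℝ)+1)^n = (1 + 1/(n:ℝ))^n * (n:ℝ)^n := by
      rw [← mul_pow]
      congr 1
      field_simp
    calc ((n:ℝ)+1)^n = (1 + 1/(n:ℝ))^n * (n:ℝ)^n := h5
      _ ≤ Real.exp 1 * (n:ℝ)^n := by
          rw [h4] at h3
          exact mul_le_mul_of_nonneg_right h3 (by positivity)
  rw [div_le_div_iff₀ (by positivity) (by positivity)]
  have e1 : (((n+1).factorial : ℕ) : ℝ) = ((n:ℝ)+1) * n.factorial := by
    push_cast [Nat.factorial_succ]; ring
  have e2 : Real.exp ((n:ℝ)+1) = Real.exp n * Real.exp 1 := by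
    rw [← Real.exp_add]
  rw [e1, e2, pow_succ]
  have hf : (0:ℝ) < (n.factorial:ℝ) := by exact_mod_cast n.factorial_pos
  calc (n.factorial:ℝ) * Real.exp n * (((n:ℝ)+1)^n * ((n:ℝ)+1))
      = ((n:ℝ)+1) * (n.factorial:ℝ) * Real.exp n * ((n:ℝ)+1)^n := by ring
    _ ≤ ((n:ℝ)+1) * (n.factorial:ℝ) * Real.exp n * (Real.exp 1 * (n:ℝ)^n) := by
        apply mul_le_mul_of_nonneg_left h1
        positivity
    _ = ((n:ℝ)+1) * (n.factorial:ℝ) * (Real.exp n * Real.exp 1) * (n:ℝ)^n := by ring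

lemma Bmono (a b : ℕ) (ha : 1 ≤ a) (hab : a ≤ b) :
    (a.factorial : ℝ) * Real.exp a / (a:ℝ)^a ≤
    (b.factorial : ℝ) * Real.exp b / (b:ℝ)^b := by
  induction b, hab using Nat.le_induction with
  | base => exact le_refl _
  | succ n hn ih =>
      refine ih.trans ?_
      have := Bstep n (ha.trans hn)
      push_cast at this ⊢
      exact this

-- step 6: (s+1)^s e^{-(s+1)} ≤ μ^s e^{-μ} for s ≤ μ ≤ s+1
lemma step6 (s : ℕ) (μ : ℝ) (hμ : 0 < μ) (h1 : (s:ℝ) ≤ μ) (h2 : μ ≤ (s:ℝ)+1) :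
    ((s:ℝ)+1)^s * Real.exp (-((s:ℝ)+1)) ≤ μ^s * Real.exp (-μ) := by
  have hq : (0:ℝ) < ((s:ℝ)+1)/μ := by positivity
  have hlog : Real.log (((s:ℝ)+1)/μ) ≤ ((s:ℝ)+1)/μ - 1 := Real.log_le_sub_one_of_pos hq
  have hkey : (s:ℝ) * Real.log (((s:ℝ)+1)/μ) ≤ (s:ℝ)+1-μ := by
    have h3 : ((s:ℝ)+1)/μ - 1 = ((s:ℝ)+1-μ)/μ := by field_simp
    have h4 : (s:ℝ) * (((s:ℝ)+1-μ)/μ) ≤ (s:ℝ)+1-μ := by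
      rw [mul_div_assoc']
      rw [div_le_iff₀ hμ]
      nlinarith
    calc (s:ℝ) * Real.log (((s:ℝ)+1)/μ) ≤ (s:ℝ) * (((s:ℝ)+1-μ)/μ) := by
          rw [h3] at hlog
          exact mul_le_mul_of_nonneg_left hlog (by positivity)
      _ ≤ (s:ℝ)+1-μ := h4
  have hpow : (((s:ℝ)+1)/μ)^s ≤ Real.exp ((s:ℝ)+1-μ) := by
    calc (((s:ℝ)+1)/μ)^s = Real.exp ((s:ℝ) * Real.log (((s:ℝ)+1)/μ)) := by
          rw [Real.exp_nat_mul, Real.exp_log hq]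
      _ ≤ Real.exp ((s:ℝ)+1-μ) := Real.exp_le_exp.2 hkey
  have := mul_le_mul_of_nonneg_right hpow (le_of_lt (mul_pos (pow_pos hμ s) (Real.exp_pos (-((s:ℝ)+1)))))
  calc ((s:ℝ)+1)^s * Real.exp (-((s:ℝ)+1))
      = (((s:ℝ)+1)/μ)^s * (μ^s * Real.exp (-((s:ℝ)+1))) := by
        rw [div_pow]
        field_simp
    _ ≤ Real.exp ((s:ℝ)+1-μ) * (μ^s * Real.exp (-((s:ℝ)+1))) := this
    _ = μ^s * Real.exp (-μ) := by
        rw [mul_comm, mul_assoc, ← Real.exp_add]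
        congr 2
        ring

-- key analytic lemma
lemma keylem (s t : ℕ) (μ : ℝ) (hst : s < t) (h1 : (s:ℝ) ≤ μ) (h2 : μ ≤ (s:ℝ)+1) (hμ : 0 < μ) :
    (t:ℝ)^t * Real.exp (μ - (t:ℝ)) ≤ ((t.factorial : ℝ) / (s.factorial : ℝ)) * μ^s := by
  have ht0 : (0:ℝ) < (t:ℝ) := by exact_mod_cast Nat.lt_of_lt_of_le (Nat.zero_lt_succ s) hst
  have hs1 : (0:ℝ) < (s:ℝ)+1 := by positivity
  have hfs : (0:ℝ) < (s.factorial:ℝ) := by exact_mod_cast s.factorial_pos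
  have hB := Bmono (s+1) t (Nat.succ_le_succ (Nat.zero_le s)) hst
  push_cast at hB
  rw [div_le_div_iff₀ (by positivity) (by positivity)] at hB
  -- hB : (s+1)! * exp(s+1) * t^t ≤ t! * exp t * (s+1)^(s+1)
  have c2 : (s.factorial:ℝ) * Real.exp ((s:ℝ)+1) * (t:ℝ)^t ≤
      (t.factorial:ℝ) * Real.exp t * ((s:ℝ)+1)^s := by
    have e1 : ((s+1).factorial : ℝ) = ((s:ℝ)+1) * (s.factorial:ℝ) := by
      push_cast [Nat.factorial_succ]; ring
    rw [e1, pow_succ] at hB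
    have := (mul_le_mul_iff_of_pos_right hs1).mp (by linarith [hB] :
      ((s.factorial:ℝ) * Real.exp ((s:ℝ)+1) * (t:ℝ)^t) * ((s:ℝ)+1) ≤
      ((t.factorial:ℝ) * Real.exp t * ((s:ℝ)+1)^s) * ((s:ℝ)+1))
    exact this
  have h6 := step6 s μ hμ h1 h2
  have hT : (t:ℝ)^t ≤ ((t.factorial:ℝ) / (s.factorial:ℝ)) * Real.exp t * (μ^s * Real.exp (-μ)) := by
    have c3 : (t:ℝ)^t ≤ ((t.factorial:ℝ) / (s.factorial:ℝ)) * Real.exp t *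
        (((s:ℝ)+1)^s * Real.exp (-((s:ℝ)+1))) := by
      rw [div_mul_eq_mul_div, div_mul_eq_mul_div, le_div_iff₀ hfs]
      calc (t:ℝ)^t * (s.factorial:ℝ)
          = ((s.factorial:ℝ) * Real.exp ((s:ℝ)+1) * (t:ℝ)^t) * Real.exp (-((s:ℝ)+1)) := by
            have he : Real.exp ((s:ℝ)+1) * Real.exp (-((s:ℝ)+1)) = 1 := by
              have h0 : (s:ℝ)+1 + -((s:ℝ)+1) = 0 := by ring
              rw [← Real.exp_add, h0, Real.exp_zero]
            linear_combination (-((s.factorial:ℝ) * (t:ℝ)^t)) * he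
        _ ≤ ((t.factorial:ℝ) * Real.exp t * ((s:ℝ)+1)^s) * Real.exp (-((s:ℝ)+1)) :=
            mul_le_mul_of_nonneg_right c2 (Real.exp_pos _).le
        _ = (t.factorial:ℝ) * Real.exp t * (((s:ℝ)+1)^s * Real.exp (-((s:ℝ)+1))) := by ring
    refine c3.trans ?_
    exact mul_le_mul_of_nonneg_left h6 (by positivity)
  calc (t:ℝ)^t * Real.exp (μ - (t:ℝ))
      ≤ (((t.factorial:ℝ) / (s.factorial:ℝ)) * Real.exp t * (μ^s * Real.exp (-μ))) *
          Real.exp (μ - (t:ℝ)) := mul_le_mul_of_nonneg_right hT (Real.exp_pos _).le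
    _ = ((t.factorial:ℝ) / (s.factorial:ℝ)) * μ^s *
          (Real.exp t * Real.exp (-μ) * Real.exp (μ - (t:ℝ))) := by ring
    _ = ((t.factorial:ℝ) / (s.factorial:ℝ)) * μ^s := by
        rw [← Real.exp_add, ← Real.exp_add]
        have : (t:ℝ) + -μ + (μ - (t:ℝ)) = 0 := by ring
        rw [this, Real.exp_zero, mul_one]

lemma myInnerSum (m w : ℕ) (p : ℝ) (S : Finset (Fin m)) (hS : S.card = w) :
    ∑ x : Fin m → Bool,
      (if S ⊆ Finset.univ.filter (fun i => x i = true) then (1:ℝ) else 0) *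
        ∏ i, (if x i then p else 1 - p) = p ^ w := by
  have hpoint : ∀ x : Fin m → Bool,
      (if S ⊆ Finset.univ.filter (fun i => x i = true) then (1:ℝ) else 0) *
        ∏ i, (if x i then p else 1 - p) =
      ∏ i, (if i ∈ S then (if x i then p else 0) else (if x i then p else 1 - p)) := by
    intro x
    by_cases hSx : S ⊆ Finset.univ.filter (fun i => x i = true)
    · rw [if_pos hSx, one_mul]
      apply Finset.prod_congr rfl
      intro i _
      by_cases hi : i ∈ S
      · have hxi : x i = true := by simpa using hSx hi
        simp [hi, hxi]
      · simp [hi]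
    · rw [if_neg hSx, zero_mul]
      obtain ⟨i₀, hi₀S, hi₀n⟩ := Finset.not_subset.mp hSx
      have hxi : x i₀ = false := by simpa using hi₀n
      exact (Finset.prod_eq_zero (Finset.mem_univ i₀) (by simp [hi₀S, hxi])).symm
  rw [Finset.sum_congr rfl (fun x _ => hpoint x),
      ← Fintype.prod_sum (fun i (b : Bool) => if i ∈ S then (if b then p else 0) else (if b then p else 1 - p))]
  have : ∀ i : Fin m, (∑ b : Bool,
      (if i ∈ S then (if b then p else 0) else (if b then p else 1 - p))) =
      (if i ∈ S then p else 1) := by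
    intro i
    rw [Fintype.sum_bool]
    by_cases hi : i ∈ S <;> simp [hi] <;> ring
  rw [Finset.prod_congr rfl (fun i _ => this i), Fintype.prod_ite_mem S (fun _ => p),
    Finset.prod_const, hS]

lemma expectation (m w : ℕ) (p : ℝ) :
    ∑ x : Fin m → Bool,
      (((Finset.univ.filter (fun i => x i = true)).card.choose w : ℝ)) *
        ∏ i, (if x i then p else 1 - p) = (m.choose w : ℝ) * p ^ w := by
  have hrw : ∀ x : Fin m → Bool,
      (((Finset.univ.filter (fun i => x i = true)).card.choose w : ℝ)) =
      ∑ S ∈ Finset.powersetCard w Finset.univ,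
        (if S ⊆ Finset.univ.filter (fun i => x i = true) then (1:ℝ) else 0) := by
    intro x
    rw [Finset.sum_boole]
    have : (Finset.powersetCard w Finset.univ).filter
        (fun S => S ⊆ Finset.univ.filter (fun i => x i = true)) =
        Finset.powersetCard w (Finset.univ.filter (fun i => x i = true)) := by
      ext S
      simp only [Finset.mem_filter, Finset.mem_powersetCard]
      constructor
      · rintro ⟨⟨-, h2⟩, h3⟩; exact ⟨h3, h2⟩
      · rintro ⟨h1, h2⟩; exact ⟨⟨h1.trans (Finset.filter_subset _ _), h2⟩, h1⟩
    rw [this, Finset.card_powersetCard]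
  calc ∑ x : Fin m → Bool,
      (((Finset.univ.filter (fun i => x i = true)).card.choose w : ℝ)) *
        ∏ i, (if x i then p else 1 - p)
      = ∑ x : Fin m → Bool, ∑ S ∈ Finset.powersetCard w Finset.univ,
          (if S ⊆ Finset.univ.filter (fun i => x i = true) then (1:ℝ) else 0) *
            ∏ i, (if x i then p else 1 - p) := by
        apply Finset.sum_congr rfl
        intro x _
        rw [hrw x, Finset.sum_mul]
    _ = ∑ S ∈ Finset.powersetCard w Finset.univ, ∑ x : Fin m → Bool,
          (if S ⊆ Finset.univ.filter (fun i => x i = true) then (1:ℝ) else 0) *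
            ∏ i, (if x i then p else 1 - p) := Finset.sum_comm
    _ = ∑ S ∈ Finset.powersetCard w Finset.univ, p ^ w := by
        apply Finset.sum_congr rfl
        intro S hS
        exact myInnerSum m w p S (Finset.mem_powersetCard.mp hS).2
    _ = (m.choose w : ℝ) * p ^ w := by
        rw [Finset.sum_const, Finset.card_powersetCard, Finset.card_univ, Fintype.card_fin,
          nsmul_eq_mul]

/-- Schmidt–Siegel–Srinivasan: for independent Bernoulli(`p`) variables `X_1,…,X_m` with
sum `Z` and mean `μ = pm`, any integer `1 ≤ w ≤ t` with `t > μ` gives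
`Pr(Z ≥ t) ≤ C(m,w)·p^w/C(t,w)`; moreover with `w = ⌈t − μ⌉` and `t = (1+ε)μ` this bound
is at most `(e^ε/(1+ε)^{1+ε})^μ`. -/
theorem stmt13 (m t w : ℕ) (p : ℝ) (hp0 : 0 ≤ p) (hp1 : p ≤ 1)
    (hw1 : 1 ≤ w) (hwt : w ≤ t) (htm : t ≤ m) (hμ : p * m < t) :
    (∑ x ∈ Finset.univ.filter (fun x : Fin m → Bool =>
        t ≤ (Finset.univ.filter (fun i => x i = true)).card),
        ∏ i, (if x i then p else 1 - p))
      ≤ (m.choose w : ℝ) * p ^ w / (t.choose w : ℝ) ∧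
    (∀ ε : ℝ, (t : ℝ) = (1 + ε) * (p * m) → w = Nat.ceil ((t : ℝ) - p * m) →
      (m.choose w : ℝ) * p ^ w / (t.choose w : ℝ) ≤
        (Real.exp ε / (1 + ε) ^ ((1 : ℝ) + ε)) ^ (p * m)) := by
  have hCt : (0:ℝ) < (t.choose w : ℝ) := by exact_mod_cast Nat.choose_pos hwt
  have hWn : ∀ x : Fin m → Bool, 0 ≤ ∏ i, (if x i then p else 1 - p) := by
    intro x
    apply Finset.prod_nonneg
    intro i _
    by_cases h : x i <;> simp [h] <;> linarith
  constructor
  · calc ∑ x ∈ Finset.univ.filter (fun x : Fin m → Bool =>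
          t ≤ (Finset.univ.filter (fun i => x i = true)).card),
          ∏ i, (if x i then p else 1 - p)
        ≤ ∑ x ∈ Finset.univ.filter (fun x : Fin m → Bool =>
            t ≤ (Finset.univ.filter (fun i => x i = true)).card),
            (((Finset.univ.filter (fun i => x i = true)).card.choose w : ℝ) /
              (t.choose w : ℝ)) * ∏ i, (if x i then p else 1 - p) := by
          apply Finset.sum_le_sum
          intro x hx
          have htx := (Finset.mem_filter.mp hx).2
          have hle : (t.choose w : ℝ) ≤
              ((Finset.univ.filter (fun i => x i = true)).card.choose w : ℝ) := by
            exact_mod_cast Nat.choose_le_choose w htx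
          have h1 : (1:ℝ) ≤ ((Finset.univ.filter (fun i => x i = true)).card.choose w : ℝ) /
              (t.choose w : ℝ) := (one_le_div hCt).mpr hle
          calc (∏ i, (if x i then p else 1 - p))
              = 1 * ∏ i, (if x i then p else 1 - p) := (one_mul _).symm
            _ ≤ _ := mul_le_mul_of_nonneg_right h1 (hWn x)
      _ ≤ ∑ x : Fin m → Bool,
            (((Finset.univ.filter (fun i => x i = true)).card.choose w : ℝ) /
              (t.choose w : ℝ)) * ∏ i, (if x i then p else 1 - p) := by
          apply Finset.sum_le_sum_of_subset_of_nonneg (Finset.filter_subset _ _)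
          intro x _ _
          exact mul_nonneg (div_nonneg (by positivity) hCt.le) (hWn x)
      _ = (∑ x : Fin m → Bool,
            (((Finset.univ.filter (fun i => x i = true)).card.choose w : ℝ)) *
              ∏ i, (if x i then p else 1 - p)) / (t.choose w : ℝ) := by
          rw [Finset.sum_div]
          apply Finset.sum_congr rfl
          intro x _
          ring
      _ = (m.choose w : ℝ) * p ^ w / (t.choose w : ℝ) := by rw [expectation]
  · intro ε hε hw
    set μ : ℝ := p * m with hμdef
    have hμ0 : 0 ≤ μ := by positivity
    have ht1 : 1 ≤ t := hw1.trans hwt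
    have htR : (0:ℝ) < (t:ℝ) := by exact_mod_cast ht1
    have hμpos : 0 < μ := by
      rcases lt_or_eq_of_le hμ0 with h | h
      · exact h
      · exfalso
        have h0 : (t:ℝ) = 0 := by rw [hε, ← h, mul_zero]
        linarith
    have hεμ : ε * μ = (t:ℝ) - μ := by linear_combination -hε
    have hεpos : 0 < ε := by
      rcases le_or_gt ε 0 with h | h
      · nlinarith
      · exact h
    -- s := t - w
    set s : ℕ := t - w with hsdef
    have hsR : (s:ℝ) = (t:ℝ) - (w:ℝ) := by
      rw [hsdef]; push_cast [Nat.cast_sub hwt]; ring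
    have hwceil : ((t:ℝ) - μ) ≤ (w:ℝ) := by rw [hw]; exact Nat.le_ceil _
    have hwceil2 : (w:ℝ) < ((t:ℝ) - μ) + 1 := by
      rw [hw]; exact Nat.ceil_lt_add_one (by linarith)
    have hs1 : (s:ℝ) ≤ μ := by rw [hsR]; linarith
    have hs2 : μ ≤ (s:ℝ) + 1 := by rw [hsR]; linarith
    have hst : s < t := by
      apply Nat.sub_lt (lt_of_lt_of_le Nat.zero_lt_one ht1) (lt_of_lt_of_le Nat.zero_lt_one hw1)
    have hkey := keylem s t μ hst hs1 hs2 hμpos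
    -- factorial identity: choose t w * w! * s! = t!
    have hfact : (t.choose w : ℝ) * (w.factorial : ℝ) * (s.factorial : ℝ) = (t.factorial : ℝ) := by
      exact_mod_cast congrArg Nat.cast (Nat.choose_mul_factorial_mul_factorial hwt)
    have hfw : (0:ℝ) < (w.factorial : ℝ) := by exact_mod_cast w.factorial_pos
    have hfs : (0:ℝ) < (s.factorial : ℝ) := by exact_mod_cast s.factorial_pos
    -- (a) : C(m,w) p^w ≤ μ^w / w!
    have ha : (m.choose w : ℝ) * p ^ w ≤ μ ^ w / (w.factorial : ℝ) := by
      rw [le_div_iff₀ hfw]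
      have h1 : (m.choose w : ℝ) * (w.factorial : ℝ) ≤ (m:ℝ)^w := by
        have h2 : w.factorial * m.choose w ≤ m^w := by
          rw [← Nat.descFactorial_eq_factorial_mul_choose]
          exact Nat.descFactorial_le_pow m w
        calc (m.choose w : ℝ) * (w.factorial : ℝ) = ((w.factorial * m.choose w : ℕ) : ℝ) := by
              push_cast; ring
          _ ≤ ((m^w : ℕ) : ℝ) := by exact_mod_cast h2
          _ = (m:ℝ)^w := by push_cast; ring
      calc (m.choose w : ℝ) * p ^ w * (w.factorial : ℝ)
          = ((m.choose w : ℝ) * (w.factorial : ℝ)) * p ^ w := by ring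
        _ ≤ (m:ℝ)^w * p^w := mul_le_mul_of_nonneg_right h1 (by positivity)
        _ = μ ^ w := by rw [← mul_pow]; rw [hμdef]; ring_nf
    -- from keylem: t^t ≤ (t!/s!) μ^s exp(t-μ)
    have hk2 : (t:ℝ)^t ≤ ((t.factorial : ℝ) / (s.factorial : ℝ)) * μ^s * Real.exp ((t:ℝ) - μ) := by
      have := mul_le_mul_of_nonneg_right hkey (Real.exp_pos ((t:ℝ) - μ)).le
      calc (t:ℝ)^t = (t:ℝ)^t * Real.exp (μ - (t:ℝ)) * Real.exp ((t:ℝ) - μ) := by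
            rw [mul_assoc, ← Real.exp_add]
            have h0 : μ - (t:ℝ) + ((t:ℝ) - μ) = 0 := by ring
            rw [h0, Real.exp_zero, mul_one]
        _ ≤ ((t.factorial : ℝ) / (s.factorial : ℝ)) * μ^s * Real.exp ((t:ℝ) - μ) := this
    -- main chain: C(m,w) p^w / C(t,w) ≤ exp(t-μ) μ^t / t^t
    have hμts : μ ^ w * μ ^ s = μ ^ t := by
      rw [← pow_add]
      congr 1
      omega
    have hmain : (m.choose w : ℝ) * p ^ w / (t.choose w : ℝ) ≤
        Real.exp ((t:ℝ) - μ) * μ^t / (t:ℝ)^t := by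
      rw [div_le_div_iff₀ hCt (by positivity)]
      calc (m.choose w : ℝ) * p ^ w * (t:ℝ)^t
          ≤ (μ ^ w / (w.factorial : ℝ)) * (t:ℝ)^t :=
            mul_le_mul_of_nonneg_right ha (by positivity)
        _ ≤ (μ ^ w / (w.factorial : ℝ)) *
              (((t.factorial : ℝ) / (s.factorial : ℝ)) * μ^s * Real.exp ((t:ℝ) - μ)) :=
            mul_le_mul_of_nonneg_left hk2 (by positivity)
        _ = Real.exp ((t:ℝ) - μ) * (μ ^ w * μ ^ s) *
              ((t.factorial : ℝ) / ((w.factorial : ℝ) * (s.factorial : ℝ))) := by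
            field_simp
        _ = Real.exp ((t:ℝ) - μ) * μ^t * (t.choose w : ℝ) := by
            rw [hμts, ← hfact]
            field_simp
    -- identify RHS
    have h1ε : 1 + ε = (t:ℝ)/μ := by
      rw [eq_div_iff hμpos.ne']
      linarith
    have h1εpos : (0:ℝ) < 1 + ε := by positivity
    have hRHS : (Real.exp ε / (1 + ε) ^ ((1 : ℝ) + ε)) ^ μ =
        Real.exp ((t:ℝ) - μ) * μ^t / (t:ℝ)^t := by
      rw [Real.div_rpow (Real.exp_pos ε).le (Real.rpow_nonneg h1εpos.le _)]
      rw [← Real.exp_mul]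
      rw [← Real.rpow_mul h1εpos.le]
      have he1 : ((1:ℝ) + ε) * μ = (t:ℝ) := hε.symm
      rw [he1, hεμ, h1ε, Real.rpow_natCast, div_pow]
      rw [div_div_eq_mul_div]
    rw [hRHS]
    exact hmain
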